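/- Consider the single-period mean field game in dimension 1 with δ = 1, dynamics X^α = ξ + k·tanh(α) + Z (k > 0) and cost J_m(α) := E[ |X^α − m̄|² + c α² ], where ξ and Z are independent square-integrable real random variables with E[Z] = 0 and m̄ := ∫x m(dx). Then: (1) any mean field equilibrium (α,m) satisfies |m̄ − E[ξ]| ≤ k; (2) for any m, letting m̄_k denote the projection of m̄ onto [E[ξ] − k, E[ξ] + k], the function φ(a) := E[ |ξ + tanh(a) + Z − m̄_k|² ] + (c/k)a² satisfies φ''(a) ≥ 2c/k − 2|m̄_k − E[ξ]| − 2 for all a ∈ ℝ; consequently, if c > k² + k, then φ is strictly convex and has a unique minimizer on ℝ. -/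

import Mathlib

open MeasureTheory ProbabilityTheory Filter Real
open scoped ENNReal NNReal BigOperators

noncomputable section

namespace Sigmoid1

variable {Ω : Type*} [MeasurableSpace Ω]

/-- Admissible controls: `σ(ξ)`-measurable square-integrable real random variables. -/
def Adm (P : Measure Ω) (ξ α : Ω → ℝ) : Prop :=
  Measurable[MeasurableSpace.comap ξ inferInstance] α ∧ MemLp α 2 P

/-- Controlled state `X^α = ξ + k tanh(α) + Z`. -/
def X (k : ℝ) (ξ Z α : Ω → ℝ) (ω : Ω) : ℝ := ξ ω + k * Real.tanh (α ω) + Z ω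

/-- Mean of a measure on `ℝ`. -/
def mean (m : Measure ℝ) : ℝ := ∫ x, x ∂m

/-- Cost `J_m(α) = E[ |X^α − m̄|² + c α² ]`. -/
def J (P : Measure Ω) (k c : ℝ) (ξ Z : Ω → ℝ) (m : Measure ℝ) (α : Ω → ℝ) : ℝ :=
  ∫ ω, ((X k ξ Z α ω - mean m) ^ 2 + c * α ω ^ 2) ∂P

/-- Mean field equilibrium of the single-period game with bounded drift. -/
def IsMFE (P : Measure Ω) (k c : ℝ) (ξ Z : Ω → ℝ) (α : Ω → ℝ) (m : Measure ℝ) : Prop :=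
  Adm P ξ α ∧ (∀ β, Adm P ξ β → J P k c ξ Z m α ≤ J P k c ξ Z m β) ∧
    P.map (X k ξ Z α) = m

/-- The projection of `m̄` onto `[E[ξ] − k, E[ξ] + k]`. -/
def proj (meanξ k mbar : ℝ) : ℝ := max (meanξ - k) (min (meanξ + k) mbar)

end Sigmoid1

namespace BddAux

lemma hasDerivAt_tanh (x : ℝ) : HasDerivAt Real.tanh (1 - Real.tanh x ^ 2) x := by
  have hc : Real.cosh x ≠ 0 := (Real.cosh_pos x).ne'
  have h : HasDerivAt (fun y => Real.sinh y / Real.cosh y)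
      ((Real.cosh x * Real.cosh x - Real.sinh x * Real.sinh x) / Real.cosh x ^ 2) x :=
    (Real.hasDerivAt_sinh x).div (Real.hasDerivAt_cosh x) hc
  have heq : (fun y => Real.sinh y / Real.cosh y) = Real.tanh := by
    funext y; rw [Real.tanh_eq_sinh_div_cosh]
  rw [heq] at h
  convert h using 1
  rw [Real.tanh_eq_sinh_div_cosh]
  have hid := Real.cosh_sq_sub_sinh_sq x
  field_simp

lemma tanh_sq_le_one (x : ℝ) : Real.tanh x ^ 2 ≤ 1 := by
  rw [Real.tanh_eq_sinh_div_cosh, div_pow, div_le_one (pow_pos (Real.cosh_pos x) 2)]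
  nlinarith [Real.cosh_sq_sub_sinh_sq x]

lemma abs_tanh_le_one (x : ℝ) : |Real.tanh x| ≤ 1 := by
  nlinarith [tanh_sq_le_one x, sq_abs (Real.tanh x), abs_nonneg (Real.tanh x)]

lemma continuous_tanh : Continuous Real.tanh := by
  have h : Differentiable ℝ Real.tanh := fun x => (hasDerivAt_tanh x).differentiableAt
  exact h.continuous

lemma hasDerivAt_tanh_sq (a : ℝ) :
    HasDerivAt (fun x => Real.tanh x ^ 2) (2 * Real.tanh a * (1 - Real.tanh a ^ 2)) a := by
  have := (hasDerivAt_tanh a).pow 2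
  refine this.congr_deriv ?_
  push_cast
  ring

lemma hasDerivAt_F (A B cK a : ℝ) :
    HasDerivAt (fun x => A + B * Real.tanh x + Real.tanh x ^ 2 + cK * x ^ 2)
      (B * (1 - Real.tanh a ^ 2) + 2 * Real.tanh a * (1 - Real.tanh a ^ 2) + cK * (2 * a)) a := by
  have h1 := hasDerivAt_tanh a
  have h2 := hasDerivAt_tanh_sq a
  have h3 : HasDerivAt (fun x : ℝ => x ^ 2) (2 * a) a := by
    simpa using hasDerivAt_pow 2 a
  exact (((h1.const_mul B).const_add A).add h2).add (h3.const_mul cK)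

lemma hasDerivAt_F1 (B cK a : ℝ) :
    HasDerivAt
      (fun x => B * (1 - Real.tanh x ^ 2) + 2 * Real.tanh x * (1 - Real.tanh x ^ 2) + cK * (2 * x))
      (-(B * (2 * Real.tanh a * (1 - Real.tanh a ^ 2)))
        + 2 * ((1 - Real.tanh a ^ 2) ^ 2 - 2 * Real.tanh a ^ 2 * (1 - Real.tanh a ^ 2))
        + cK * 2) a := by
  have h1 := hasDerivAt_tanh a
  have h2 := hasDerivAt_tanh_sq a
  have hA : HasDerivAt (fun x => B * (1 - Real.tanh x ^ 2))
      (B * -(2 * Real.tanh a * (1 - Real.tanh a ^ 2))) a := (h2.const_sub 1).const_mul B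
  have hB : HasDerivAt (fun x => 2 * Real.tanh x * (1 - Real.tanh x ^ 2))
      ((2 * (1 - Real.tanh a ^ 2)) * (1 - Real.tanh a ^ 2)
        + (2 * Real.tanh a) * -(2 * Real.tanh a * (1 - Real.tanh a ^ 2))) a :=
    (h1.const_mul 2).mul (h2.const_sub 1)
  have hC : HasDerivAt (fun x : ℝ => cK * (2 * x)) (cK * (2 * 1)) a :=
    ((hasDerivAt_id a).const_mul 2).const_mul cK
  have := (hA.add hB).add hC
  refine this.congr_deriv ?_
  ring

lemma F2_bound (B cK t : ℝ) (ht : t ^ 2 ≤ 1) :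
    2 * cK - |B| - 2 ≤
      -(B * (2 * t * (1 - t ^ 2))) + 2 * ((1 - t ^ 2) ^ 2 - 2 * t ^ 2 * (1 - t ^ 2)) + cK * 2 := by
  have ht0 : 0 ≤ t ^ 2 := sq_nonneg t
  have hs : (2 * t * (1 - t ^ 2)) ^ 2 ≤ 1 := by
    nlinarith [sq_nonneg (t ^ 2 - 1 / 3), sq_nonneg (t ^ 2 - 1), sq_nonneg t,
      sq_nonneg (t * (t ^ 2 - 1))]
  have habs : |2 * t * (1 - t ^ 2)| ≤ 1 := by
    nlinarith [sq_abs (2 * t * (1 - t ^ 2)), abs_nonneg (2 * t * (1 - t ^ 2))]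
  have h1 : B * (2 * t * (1 - t ^ 2)) ≤ |B| := by
    calc B * (2 * t * (1 - t ^ 2)) ≤ |B * (2 * t * (1 - t ^ 2))| := le_abs_self _
    _ = |B| * |2 * t * (1 - t ^ 2)| := abs_mul _ _
    _ ≤ |B| * 1 := mul_le_mul_of_nonneg_left habs (abs_nonneg B)
    _ = |B| := mul_one _
  have h2 : -2 ≤ 2 * ((1 - t ^ 2) ^ 2 - 2 * t ^ 2 * (1 - t ^ 2)) := by
    nlinarith [sq_nonneg (t ^ 2 - 2 / 3)]
  linarith

lemma Bt_bound (B t : ℝ) (ht : |t| ≤ 1) : -|B| ≤ B * t := by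
  calc -|B| = -(|B| * 1) := by ring
  _ ≤ -(|B| * |t|) := by nlinarith [abs_nonneg B]
  _ = -|B * t| := by rw [abs_mul]
  _ ≤ B * t := neg_abs_le _

end BddAux

/-- Section 2.3.2, bounded drift. For the single-period game with dynamics
`X^α = ξ + k tanh(α) + Z` and quadratic costs: (1) every MFE `(α,m)` satisfies
`|m̄ − E[ξ]| ≤ k`; (2) the truncated one-dimensional cost
`φ(a) = E[|ξ + tanh(a) + Z − m̄_k|²] + (c/k) a²` has second derivative bounded below by
`2c/k − 2|m̄_k − E[ξ]| − 2`; consequently if `c > k² + k` then `φ` is strictly convex with a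
unique minimizer. -/
theorem bounded_drift_single_period
    {Ω : Type*} [MeasurableSpace Ω] (P : Measure Ω) [IsProbabilityMeasure P]
    (k c : ℝ) (hk : 0 < k) (hc : 0 < c)
    (ξ Z : Ω → ℝ) (hξ : Measurable ξ) (hZ : Measurable Z) (hindep : IndepFun ξ Z P)
    (hξ2 : MemLp ξ 2 P) (hZ2 : MemLp Z 2 P) (hZmean : (∫ ω, Z ω ∂P) = 0) :
    -- (1) any mean field equilibrium satisfies `|m̄ − E[ξ]| ≤ k`
    (∀ (α : Ω → ℝ) (m : Measure ℝ), Sigmoid1.IsMFE P k c ξ Z α m →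
      |Sigmoid1.mean m - ∫ ω, ξ ω ∂P| ≤ k) ∧
    -- (2) the convexity estimate for the truncated cost
    (∀ m : Measure ℝ,
      let mbark := Sigmoid1.proj (∫ ω, ξ ω ∂P) k (Sigmoid1.mean m)
      let φ : ℝ → ℝ := fun a => (∫ ω, (ξ ω + Real.tanh a + Z ω - mbark) ^ 2 ∂P) + (c / k) * a ^ 2
      (∀ a : ℝ, 2 * c / k - 2 * |mbark - ∫ ω, ξ ω ∂P| - 2 ≤ iteratedDeriv 2 φ a) ∧
      (c > k ^ 2 + k →
        StrictConvexOn ℝ Set.univ φ ∧ ∃! a : ℝ, ∀ a' : ℝ, φ a ≤ φ a')) := by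
  have hEξint : Integrable ξ P := hξ2.integrable one_le_two
  have hZint : Integrable Z P := hZ2.integrable one_le_two
  constructor
  · -- Part (1)
    rintro α m ⟨⟨hαmeas, hα2⟩, -, hmap⟩
    have hα : Measurable α := hαmeas.mono hξ.comap_le le_rfl
    have htanh_meas : Measurable fun ω => Real.tanh (α ω) :=
      BddAux.continuous_tanh.measurable.comp hα
    have hXmeas : Measurable (Sigmoid1.X k ξ Z α) := by
      unfold Sigmoid1.X
      exact (hξ.add (htanh_meas.const_mul k)).add hZ
    have htanhint : Integrable (fun ω => Real.tanh (α ω)) P := by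
      refine (integrable_const (1 : ℝ)).mono' htanh_meas.aestronglyMeasurable ?_
      exact ae_of_all _ fun ω => by
        simpa [Real.norm_eq_abs] using BddAux.abs_tanh_le_one (α ω)
    have hmean : Sigmoid1.mean m = (∫ ω, ξ ω ∂P) + k * ∫ ω, Real.tanh (α ω) ∂P := by
      rw [← hmap, Sigmoid1.mean,
        show (∫ x, x ∂(P.map (Sigmoid1.X k ξ Z α))) = ∫ ω, Sigmoid1.X k ξ Z α ω ∂P from
          integral_map hXmeas.aemeasurable aestronglyMeasurable_id]
      simp only [id_eq, Sigmoid1.X]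
      have hint1 : Integrable (fun ω => ξ ω + k * Real.tanh (α ω)) P :=
        hEξint.add (htanhint.const_mul k)
      have hint2 : Integrable (fun ω => k * Real.tanh (α ω)) P := htanhint.const_mul k
      rw [integral_add hint1 hZint, integral_add hEξint hint2, integral_const_mul, hZmean,
        add_zero]
    have hint_le : |∫ ω, Real.tanh (α ω) ∂P| ≤ 1 := by
      calc |∫ ω, Real.tanh (α ω) ∂P| ≤ ∫ ω, |Real.tanh (α ω)| ∂P := by
            simpa [Real.norm_eq_abs] using
              norm_integral_le_integral_norm (fun ω => Real.tanh (α ω)) (μ := P)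
      _ ≤ ∫ _ω, (1 : ℝ) ∂P :=
            integral_mono htanhint.abs (integrable_const 1) fun ω => BddAux.abs_tanh_le_one (α ω)
      _ = 1 := by simp
    rw [hmean, add_sub_cancel_left, abs_mul, abs_of_pos hk]
    nlinarith [abs_nonneg (∫ ω, Real.tanh (α ω) ∂P)]
  · -- Part (2)
    intro m mbark φ
    set Eξ : ℝ := ∫ ω, ξ ω ∂P with hEξdef
    set A : ℝ := ∫ ω, (ξ ω + Z ω - mbark) ^ 2 ∂P with hAdef
    set B : ℝ := 2 * (Eξ - mbark) with hBdef
    have hW2 : MemLp (fun ω => ξ ω + Z ω - mbark) 2 P := (hξ2.add hZ2).sub (memLp_const mbark)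
    have hWsq : Integrable (fun ω => (ξ ω + Z ω - mbark) ^ 2) P := hW2.integrable_sq
    have hWint : Integrable (fun ω => ξ ω + Z ω - mbark) P := hW2.integrable one_le_two
    have hadd : Integrable (fun ω => ξ ω + Z ω) P := hEξint.add hZint
    have hWmean : (∫ ω, (ξ ω + Z ω - mbark) ∂P) = Eξ - mbark := by
      rw [integral_sub hadd (integrable_const _), integral_add hEξint hZint,
        hZmean, integral_const]
      simp [hEξdef]
    have hφ : φ = fun a => A + B * Real.tanh a + Real.tanh a ^ 2 + (c / k) * a ^ 2 := by
      funext a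
      show (∫ ω, (ξ ω + Real.tanh a + Z ω - mbark) ^ 2 ∂P) + (c / k) * a ^ 2 = _
      have h1 : ∀ ω, (ξ ω + Real.tanh a + Z ω - mbark) ^ 2
          = (ξ ω + Z ω - mbark) ^ 2 + (2 * Real.tanh a) * (ξ ω + Z ω - mbark)
            + Real.tanh a ^ 2 := fun ω => by ring
      simp only [h1]
      have hint1 : Integrable (fun ω => (ξ ω + Z ω - mbark) ^ 2
          + (2 * Real.tanh a) * (ξ ω + Z ω - mbark)) P := hWsq.add (hWint.const_mul _)
      have hint2 : Integrable (fun ω => (2 * Real.tanh a) * (ξ ω + Z ω - mbark)) P :=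
        hWint.const_mul _
      rw [integral_add hint1 (integrable_const _),
        integral_add hWsq hint2, integral_const_mul, hWmean, integral_const]
      simp only [measure_univ, ENNReal.toReal_one, probReal_univ, smul_eq_mul, one_mul, mul_one]
      rw [hBdef, ← hAdef]
      ring
    have hbound : ∀ a : ℝ, 2 * c / k - 2 * |mbark - Eξ| - 2 ≤ iteratedDeriv 2 φ a := by
      intro a
      have hd1 : deriv φ = fun x => B * (1 - Real.tanh x ^ 2)
          + 2 * Real.tanh x * (1 - Real.tanh x ^ 2) + (c / k) * (2 * x) := by
        funext x
        rw [hφ]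
        exact (BddAux.hasDerivAt_F A B (c / k) x).deriv
      have h2 : iteratedDeriv 2 φ a
          = -(B * (2 * Real.tanh a * (1 - Real.tanh a ^ 2)))
            + 2 * ((1 - Real.tanh a ^ 2) ^ 2 - 2 * Real.tanh a ^ 2 * (1 - Real.tanh a ^ 2))
            + (c / k) * 2 := by
        rw [show (2 : ℕ) = 1 + 1 from rfl, iteratedDeriv_succ, iteratedDeriv_one, hd1]
        exact (BddAux.hasDerivAt_F1 B (c / k) a).deriv
      rw [h2]
      have hBabs : |B| = 2 * |mbark - Eξ| := by
        rw [hBdef, show 2 * (Eξ - mbark) = -(2 * (mbark - Eξ)) by ring, abs_neg, abs_mul]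
        norm_num
      have hF2 := BddAux.F2_bound B (c / k) (Real.tanh a) (BddAux.tanh_sq_le_one a)
      rw [hBabs] at hF2
      calc 2 * c / k - 2 * |mbark - Eξ| - 2
          = 2 * (c / k) - 2 * |mbark - Eξ| - 2 := by ring
      _ ≤ _ := hF2
    refine ⟨hbound, fun hck => ?_⟩
    have hDk : |mbark - Eξ| ≤ k := by
      have h1 : Eξ - k ≤ mbark := le_max_left _ _
      have h2 : mbark ≤ Eξ + k := max_le (by linarith) (min_le_left _ _)
      rw [abs_le]
      constructor <;> linarith
    have h3 : 2 * k + 2 < 2 * c / k := by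
      rw [lt_div_iff₀ hk]
      nlinarith
    have hposval : 0 < 2 * c / k - 2 * |mbark - Eξ| - 2 := by linarith
    have hpos2 : ∀ x : ℝ, 0 < (deriv^[2] φ) x := by
      intro x
      rw [← iteratedDeriv_eq_iterate]
      exact lt_of_lt_of_le hposval (hbound x)
    have hcont : Continuous φ := by
      rw [hφ]
      exact ((continuous_const.add (continuous_const.mul BddAux.continuous_tanh)).add
        (BddAux.continuous_tanh.pow 2)).add (continuous_const.mul (continuous_pow 2))
    have hSC : StrictConvexOn ℝ Set.univ φ := strictConvexOn_univ_of_deriv2_pos hcont hpos2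
    refine ⟨hSC, ?_⟩
    have hck0 : 0 < c / k := div_pos hc hk
    have hsq : Tendsto (fun a : ℝ => a ^ 2) (cocompact ℝ) atTop := by
      have h := (tendsto_pow_atTop (two_ne_zero)).comp (tendsto_norm_cocompact_atTop (E := ℝ))
      refine h.congr fun a => ?_
      simp [Function.comp, Real.norm_eq_abs, sq_abs]
    have hlow : Tendsto (fun a : ℝ => (c / k) * a ^ 2 + (A - |B|)) (cocompact ℝ) atTop :=
      tendsto_atTop_add_const_right _ _ (hsq.const_mul_atTop hck0)
    have hge : ∀ a : ℝ, (c / k) * a ^ 2 + (A - |B|) ≤ φ a := by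
      intro a
      rw [hφ]
      have hBt := BddAux.Bt_bound B (Real.tanh a) (BddAux.abs_tanh_le_one a)
      nlinarith [sq_nonneg (Real.tanh a)]
    have hφtop : Tendsto φ (cocompact ℝ) atTop := tendsto_atTop_mono hge hlow
    obtain ⟨a₀, ha₀⟩ := hcont.exists_forall_le hφtop
    refine ⟨a₀, ha₀, fun b hb => ?_⟩
    by_contra hne
    have heq : φ b = φ a₀ := le_antisymm (hb a₀) (ha₀ b)
    have hmid := hSC.2 (Set.mem_univ b) (Set.mem_univ a₀) hne
      (by norm_num : (0 : ℝ) < 1 / 2) (by norm_num : (0 : ℝ) < 1 / 2) (by norm_num)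
    simp only [smul_eq_mul] at hmid
    have hle := hb ((1 / 2) * b + (1 / 2) * a₀)
    rw [heq] at hmid
    have hcontr : φ b < 1 / 2 * φ a₀ + 1 / 2 * φ a₀ := lt_of_le_of_lt hle hmid
    have hlt : φ a₀ < φ a₀ := by
      calc φ a₀ = φ b := heq.symm
      _ < 1 / 2 * φ a₀ + 1 / 2 * φ a₀ := hcontr
      _ = φ a₀ := by ring
    exact lt_irrefl _ hlt
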